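/- arXiv:2006.13201 — 4 statements merged into one kernel-verified Lean document; each statement's English description precedes it below -/
import Mathlib

section
/- Let K ⊂ ℝⁿ be a nonempty bounded convex set with diameter at most h > 0, and let φ : ℝⁿ → ℝ be Lipschitz continuous on K with Lipschitz constant L satisfying L·h ≤ (1/2)·sup_{x∈K}|φ(x)|. Then for every function v that is square integrable on K (with respect to Lebesgue measure), one has (sup_{x∈K}|φ(x)|) · ‖v‖_{L²(K)} ≤ 2 ‖φ · v‖_{L²(K)}. -/
open MeasureTheory

/-- Weighted norm equivalence (Lemma 3.1 of the paper): if `K` is a nonempty bounded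
convex set of diameter at most `h`, and `φ` is Lipschitz on `K` with constant `L`
satisfying `L·h ≤ (1/2)·sup_K |φ|`, then for every `v ∈ L²(K)` one has
`(sup_K |φ|) ‖v‖_{L²(K)} ≤ 2 ‖φ v‖_{L²(K)}`. -/
theorem weighted_norm_equivalence (n : ℕ) (h L : ℝ) (h0 : 0 < h) (hL : 0 ≤ L)
    (K : Set (EuclideanSpace ℝ (Fin n))) (hne : K.Nonempty)
    (hbdd : Bornology.IsBounded K) (hconv : Convex ℝ K) (hdiam : Metric.diam K ≤ h)
    (φ : EuclideanSpace ℝ (Fin n) → ℝ)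
    (hlip : LipschitzOnWith L.toNNReal φ K)
    (hsmall : L * h ≤ (1 / 2) * ⨆ x ∈ K, |φ x|)
    (v : EuclideanSpace ℝ (Fin n) → ℝ)
    (hv : MemLp v 2 (volume.restrict K)) :
    (⨆ x ∈ K, |φ x|) * (eLpNorm v 2 (volume.restrict K)).toReal
      ≤ 2 * (eLpNorm (fun x => φ x * v x) 2 (volume.restrict K)).toReal := by
  set M : ℝ := ⨆ x ∈ K, |φ x| with hM
  -- oscillation bound on K
  have hosc : ∀ x ∈ K, ∀ y ∈ K, |φ y| ≤ |φ x| + L * h := by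
    intro x hx y hy
    have hd : dist (φ y) (φ x) ≤ L * dist y x := by
      have := hlip.dist_le_mul y hy x hx
      rwa [Real.coe_toNNReal L hL] at this
    have hdist : dist y x ≤ h := le_trans (Metric.dist_le_diam_of_mem hbdd hy hx) hdiam
    have : |φ y - φ x| ≤ L * h := by
      calc |φ y - φ x| = dist (φ y) (φ x) := (Real.dist_eq _ _).symm
        _ ≤ L * dist y x := hd
        _ ≤ L * h := by nlinarith [dist_nonneg (x := y) (y := x)]
    calc |φ y| = |φ x + (φ y - φ x)| := by ring_nf
      _ ≤ |φ x| + |φ y - φ x| := abs_add_le _ _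
      _ ≤ |φ x| + L * h := by linarith
  -- upper: M ≤ |φ x| + L h for each x ∈ K
  have hMle : ∀ x ∈ K, M ≤ |φ x| + L * h := by
    intro x hx
    apply Real.iSup_le
    · intro y
      apply Real.iSup_le
      · intro hy; exact hosc x hx y hy
      · positivity
    · positivity
  -- M nonneg
  have hM0 : 0 ≤ M := by nlinarith
  -- lower bound on |φ| on K
  have hlow : ∀ x ∈ K, M / 2 ≤ |φ x| := by
    intro x hx
    have := hMle x hx
    linarith
  -- bddAbove of the inner sup family, for upper bound |φ x| ≤ M
  obtain ⟨x₀, hx₀⟩ := hne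
  have hbddA : BddAbove (Set.range fun x => ⨆ _ : x ∈ K, |φ x|) := by
    refine ⟨|φ x₀| + L * h, ?_⟩
    rintro _ ⟨y, rfl⟩
    apply Real.iSup_le
    · intro hy; exact hosc x₀ hx₀ y hy
    · positivity
  have hup : ∀ x ∈ K, |φ x| ≤ M := by
    intro x hx
    have : (⨆ _ : x ∈ K, |φ x|) ≤ M := le_ciSup hbddA x
    rwa [ciSup_pos hx] at this
  -- measure theory
  have hKnm : NullMeasurableSet K volume := hconv.nullMeasurableSet volume
  have hmem : ∀ᵐ x ∂(volume.restrict K), x ∈ K := ae_restrict_mem₀ hKnm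
  -- lower eLpNorm bound
  have h1 : eLpNorm (fun x => (M / 2) * v x) 2 (volume.restrict K)
      ≤ eLpNorm (fun x => φ x * v x) 2 (volume.restrict K) := by
    apply eLpNorm_mono_ae
    filter_upwards [hmem] with x hx
    simp only [Real.norm_eq_abs, abs_mul]
    have := hlow x hx
    have : |M / 2| = M / 2 := abs_of_nonneg (by linarith)
    rw [this]
    exact mul_le_mul_of_nonneg_right (hlow x hx) (abs_nonneg _)
  -- upper eLpNorm bound (finiteness)
  have h2 : eLpNorm (fun x => φ x * v x) 2 (volume.restrict K)
      ≤ eLpNorm (fun x => M * v x) 2 (volume.restrict K) := by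
    apply eLpNorm_mono_ae
    filter_upwards [hmem] with x hx
    simp only [Real.norm_eq_abs, abs_mul]
    rw [abs_of_nonneg hM0]
    exact mul_le_mul_of_nonneg_right (hup x hx) (abs_nonneg _)
  have hsmul : ∀ c : ℝ, eLpNorm (fun x => c * v x) 2 (volume.restrict K)
      = (‖c‖₊ : ENNReal) * eLpNorm v 2 (volume.restrict K) := by
    intro c
    have : (fun x => c * v x) = c • v := by ext x; simp
    rw [this, eLpNorm_const_smul, enorm_eq_nnnorm]
  have hvfin : eLpNorm v 2 (volume.restrict K) < ⊤ := hv.2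
  have hfin : eLpNorm (fun x => φ x * v x) 2 (volume.restrict K) < ⊤ := by
    calc eLpNorm (fun x => φ x * v x) 2 (volume.restrict K)
        ≤ (‖M‖₊ : ENNReal) * eLpNorm v 2 (volume.restrict K) := by rw [← hsmul]; exact h2
      _ < ⊤ := ENNReal.mul_lt_top (by simp) hvfin
  rw [hsmul] at h1
  have := ENNReal.toReal_mono hfin.ne h1
  rw [ENNReal.toReal_mul] at this
  have he : ((‖M / 2‖₊ : ENNReal)).toReal = M / 2 := by
    rw [← enorm_eq_nnnorm, Real.enorm_eq_ofReal (by linarith), ENNReal.toReal_ofReal (by linarith)]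
  rw [he] at this
  linarith
end

section
/- Let p₀, …, p_n be n+1 affinely independent points in ℝⁿ, K their convex hull, and λ₀(x), …, λ_n(x) the barycentric coordinates with respect to p₀, …, p_n; write (I g)(x) = Σ_{i=0}^{n} λᵢ(x) g(pᵢ). Let v : ℝⁿ → ℝ be an affine map and let φ : ℝⁿ → ℝ be Lipschitz continuous on K with Lipschitz constant L. Then sup_{x∈K} |v(x) φ(x) − I(v·φ)(x)| ≤ 2 L · diam(K) · sup_{x∈K} |v(x)|. -/
/-- L^∞ form of the discrete commutator property (Lemma 3.2 of the paper): for an affine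
map `v` and a weight `φ` Lipschitz on `K` with constant `L`, the P1 interpolation error of
the product satisfies `sup_K |vφ − I(vφ)| ≤ 2 L diam(K) sup_K |v|`. -/
theorem discrete_commutator_Linfty (n : ℕ) (hn : 1 ≤ n)
    (b : AffineBasis (Fin (n + 1)) ℝ (EuclideanSpace ℝ (Fin n)))
    (K : Set (EuclideanSpace ℝ (Fin n))) (hK : K = convexHull ℝ (Set.range ⇑b))
    (v : EuclideanSpace ℝ (Fin n) →ᵃ[ℝ] ℝ)
    (φ : EuclideanSpace ℝ (Fin n) → ℝ) (L : NNReal)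
    (hφ : LipschitzOnWith L φ K) :
    ∀ x ∈ K, |v x * φ x - ∑ i, b.coord i x * (v (b i) * φ (b i))| ≤
      2 * L * Metric.diam K * ⨆ y ∈ K, |v y| := by
  intro x hx
  -- basic facts
  have hbK : ∀ i, b i ∈ K := fun i => by
    rw [hK]; exact subset_convexHull ℝ _ ⟨i, rfl⟩
  have hKc : IsCompact K := by
    rw [hK]; exact (Set.finite_range _).isCompact_convexHull ℝ
  -- the sup of |v| over K
  set S : ℝ := ⨆ y ∈ K, |v y| with hS
  have hcont : Continuous fun y : EuclideanSpace ℝ (Fin n) => |v y| :=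
    v.continuous_of_finiteDimensional.abs
  obtain ⟨C, hC⟩ : ∃ C, ∀ y ∈ K, |v y| ≤ C := by
    rcases (hKc.image hcont).bddAbove with ⟨C, hC⟩
    exact ⟨C, fun y hy => hC ⟨y, hy, rfl⟩⟩
  have hbdd : BddAbove (Set.range fun y => ⨆ _ : y ∈ K, |v y|) := by
    refine ⟨max C 0, ?_⟩
    rintro _ ⟨y, rfl⟩
    by_cases hy : y ∈ K
    · simp only []
      rw [ciSup_pos hy]; exact le_max_of_le_left (hC y hy)
    · simp [hy]
  have hSle : ∀ y ∈ K, |v y| ≤ S := fun y hy => by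
    rw [hS, ← ciSup_pos (f := fun _ : y ∈ K => |v y|) hy]
    exact le_ciSup hbdd y
  -- coordinate facts
  have hcoord_nonneg : ∀ i, 0 ≤ b.coord i x := by
    have := hx
    rw [hK, b.convexHull_eq_nonneg_coord] at this
    exact this
  have hsum1 : ∑ i, b.coord i x = 1 := b.sum_coord_apply_eq_one x
  -- reproduction of affine functions
  have hvx : v x = ∑ i, b.coord i x * v (b i) := by
    conv_lhs => rw [← b.affineCombination_coord_eq_self x]
    rw [Finset.map_affineCombination _ _ _ hsum1,
      Finset.univ.affineCombination_eq_linear_combination _ _ hsum1]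
    simp [Function.comp, smul_eq_mul]
  -- rewrite difference
  have key : v x * φ x - ∑ i, b.coord i x * (v (b i) * φ (b i))
      = ∑ i, b.coord i x * v (b i) * (φ x - φ (b i)) := by
    rw [hvx, Finset.sum_mul, ← Finset.sum_sub_distrib]
    congr 1; ext i; ring
  rw [key]
  have hdiam : 0 ≤ Metric.diam K := Metric.diam_nonneg
  have hS0 : 0 ≤ S := le_trans (abs_nonneg _) (hSle x hx)
  have hterm : ∀ i, |b.coord i x * v (b i) * (φ x - φ (b i))|
      ≤ b.coord i x * (L * Metric.diam K * S) := by
    intro i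
    rw [abs_mul, abs_mul, abs_of_nonneg (hcoord_nonneg i), mul_assoc]
    refine mul_le_mul_of_nonneg_left ?_ (hcoord_nonneg i)
    have h1 : |φ x - φ (b i)| ≤ L * Metric.diam K := by
      have := hφ.dist_le_mul x hx (b i) (hbK i)
      rw [Real.dist_eq] at this
      refine this.trans (mul_le_mul_of_nonneg_left ?_ L.coe_nonneg)
      exact Metric.dist_le_diam_of_mem hKc.isBounded hx (hbK i)
    calc |v (b i)| * |φ x - φ (b i)| ≤ S * (L * Metric.diam K) := by
          exact mul_le_mul (hSle _ (hbK i)) h1 (abs_nonneg _) hS0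
      _ = L * Metric.diam K * S := by ring
  calc |∑ i, b.coord i x * v (b i) * (φ x - φ (b i))|
      ≤ ∑ i, |b.coord i x * v (b i) * (φ x - φ (b i))| := Finset.abs_sum_le_sum_abs _ _
    _ ≤ ∑ i, b.coord i x * (L * Metric.diam K * S) :=
        Finset.sum_le_sum fun i _ => hterm i
    _ = L * Metric.diam K * S := by rw [← Finset.sum_mul, hsum1, one_mul]
    _ ≤ 2 * L * Metric.diam K * S := by
        have : (L : ℝ) * Metric.diam K * S ≥ 0 :=
          mul_nonneg (mul_nonneg L.coe_nonneg hdiam) hS0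
        nlinarith
end

section
/- For every n ≥ 1 there exists a constant C > 0, depending only on n, with the following property. Let p₀, …, p_n be n+1 affinely independent points in ℝⁿ, let K be their convex hull with diam(K) ≤ h, let λ₀(x), …, λ_n(x) be the barycentric coordinates, and write (I g)(x) = Σ_{i=0}^{n} λᵢ(x) g(pᵢ). Then for every affine map v : ℝⁿ → ℝ and every φ : ℝⁿ → ℝ Lipschitz continuous on K with Lipschitz constant L, one has ‖v·φ − I(v·φ)‖_{L²(K)} ≤ C · L · h · ‖v‖_{L²(K)}. -/
set_option maxHeartbeats 1000000


open MeasureTheory Set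
open scoped ENNReal NNReal

noncomputable section

theorem ref_ineq (n : ℕ) (b : AffineBasis (Fin (n + 1)) ℝ (EuclideanSpace ℝ (Fin n))) :
    ∃ c : ℝ, 0 < c ∧ ∀ a : Fin (n + 1) → ℝ,
      eLpNorm (fun x => ∑ i, b.coord i x * |a i|) 2
          (volume.restrict (convexHull ℝ (Set.range ⇑b))) ≤
        ENNReal.ofReal c *
          eLpNorm (fun x => ∑ i, b.coord i x * a i) 2
            (volume.restrict (convexHull ℝ (Set.range ⇑b))) := by
  classical
  set K : Set (EuclideanSpace ℝ (Fin n)) := convexHull ℝ (Set.range ⇑b) with hK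
  have hKc : IsCompact K := (Set.finite_range ⇑b).isCompact_convexHull ℝ
  have hKm : MeasurableSet K := hKc.isClosed.measurableSet
  have hvol : volume K < ⊤ := hKc.measure_lt_top
  have hposK : 0 < volume K := by
    refine lt_of_lt_of_le ?_ (measure_mono (interior_subset (s := K)))
    exact isOpen_interior.measure_pos volume ⟨_, b.centroid_mem_interior_convexHull⟩
  have hcont : ∀ i, Continuous (b.coord i) := fun i =>
    (b.coord i).continuous_of_finiteDimensional
  set F : (Fin (n + 1) → ℝ) → EuclideanSpace ℝ (Fin n) → ℝ :=
    fun a x => ∑ i, b.coord i x * a i with hF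
  have hFcont : ∀ a, Continuous (F a) := by
    intro a
    exact continuous_finset_sum _ fun i _ => (hcont i).mul continuous_const
  set m : Fin (n + 1) → Fin (n + 1) → ℝ :=
    fun i j => ∫ x in K, b.coord i x * b.coord j x with hm
  set q : (Fin (n + 1) → ℝ) → ℝ := fun a => ∑ i, ∑ j, a i * a j * m i j with hqdef
  have hint : ∀ G : EuclideanSpace ℝ (Fin n) → ℝ, Continuous G → IntegrableOn G K volume :=
    fun G hG => hG.continuousOn.integrableOn_compact hKc
  have hq : ∀ a, ∫ x in K, (F a x) ^ 2 = q a := by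
    intro a
    have hpt : ∀ x, (F a x) ^ 2 = ∑ i, ∑ j, a i * a j * (b.coord i x * b.coord j x) := by
      intro x
      rw [sq, hF]
      rw [Finset.sum_mul_sum]
      exact Finset.sum_congr rfl fun i _ => Finset.sum_congr rfl fun j _ => by ring
    calc ∫ x in K, (F a x) ^ 2
        = ∫ x in K, ∑ i, ∑ j, a i * a j * (b.coord i x * b.coord j x) := by
          simp_rw [hpt]
      _ = q a := by
          rw [integral_finset_sum]
          · refine Finset.sum_congr rfl fun i _ => ?_
            rw [integral_finset_sum]
            · exact Finset.sum_congr rfl fun j _ => integral_const_mul _ _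
            · exact fun j _ => (hint _ (continuous_const.mul ((hcont i).mul (hcont j))))
          · intro i _
            exact integrable_finset_sum _ fun j _ =>
              (hint _ (continuous_const.mul ((hcont i).mul (hcont j))))
  have hq0 : ∀ a, 0 ≤ q a := fun a => (hq a) ▸ integral_nonneg fun x => sq_nonneg _
  have hqpos : ∀ a : Fin (n + 1) → ℝ, a ≠ 0 → 0 < q a := by
    intro a ha
    rcases (hq0 a).lt_or_eq with h | h
    · exact h
    exfalso
    -- q a = 0 : derive F a = 0 a.e. on K
    have hFi : IntegrableOn (fun x => (F a x) ^ 2) K volume :=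
      hint _ (by exact (hFcont a).pow 2)
    have hzero : (fun x => (F a x) ^ 2) =ᵐ[volume.restrict K] 0 := by
      rw [← integral_eq_zero_iff_of_nonneg (fun x => sq_nonneg _) hFi]
      rw [hq a]; exact h.symm
    have hzero' : ∀ᵐ x ∂volume.restrict K, F a x = 0 := by
      filter_upwards [hzero] with x hx
      exact pow_eq_zero_iff (n := 2) (by norm_num) |>.mp hx
    -- the affine map A with A x = F a x
    set l : (Fin (n + 1) → ℝ) →ₗ[ℝ] ℝ := ∑ i, a i • LinearMap.proj i with hl
    set A : EuclideanSpace ℝ (Fin n) →ᵃ[ℝ] ℝ := l.toAffineMap.comp b.coords with hA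
    have hAx : ∀ x, A x = F a x := by
      intro x
      simp only [hA, hl, AffineMap.comp_apply, LinearMap.coe_toAffineMap, LinearMap.coe_sum,
        LinearMap.coe_smul, LinearMap.coe_proj, Finset.sum_apply, Pi.smul_apply,
        Function.eval, smul_eq_mul, hF]
      exact Finset.sum_congr rfl fun i _ => by rw [b.coords_apply]; ring
    by_cases hAz : ∀ x, A x = 0
    · apply ha
      funext i
      have := hAz (b i)
      rw [hAx] at this
      simpa [hF, b.coord_apply, Finset.sum_ite_eq'] using this
    · push_neg at hAz
      obtain ⟨x₀, hx₀⟩ := hAz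
      set s : AffineSubspace ℝ (EuclideanSpace ℝ (Fin n)) :=
        AffineSubspace.comap A (AffineSubspace.mk' (0 : ℝ) ⊥) with hs
      have hstop : s ≠ ⊤ := by
        intro htop
        apply hx₀
        have : x₀ ∈ s := htop ▸ AffineSubspace.mem_top ℝ _ x₀
        rw [hs, AffineSubspace.mem_comap, AffineSubspace.mem_mk'] at this
        simpa using this
      have hZ : volume (s : Set (EuclideanSpace ℝ (Fin n))) = 0 :=
        Measure.addHaar_affineSubspace volume s hstop
      -- a.e. points of K lie in s
      have hmem : {x | ¬ F a x = 0} ∩ K ⊆ {x | ¬ F a x = 0} ∩ K := subset_rfl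
      have hnull : volume ({x | ¬ F a x = 0} ∩ K) = 0 := by
        have := hzero'
        rw [ae_iff, Measure.restrict_apply] at this
        · exact this
        · have : IsClosed {x | F a x = 0} := isClosed_eq (hFcont a) continuous_const
          exact this.measurableSet.compl
      have hsub : K ⊆ ({x | ¬ F a x = 0} ∩ K) ∪ (s : Set (EuclideanSpace ℝ (Fin n))) := by
        intro x hx
        by_cases hfx : F a x = 0
        · right
          rw [hs]
          show x ∈ AffineSubspace.comap A (AffineSubspace.mk' (0 : ℝ) ⊥)
          rw [AffineSubspace.mem_comap, AffineSubspace.mem_mk']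
          simp [hAx, hfx]
        · left; exact ⟨hfx, hx⟩
      have : volume K = 0 := by
        refine le_antisymm ?_ zero_le
        calc volume K ≤ volume (({x | ¬ F a x = 0} ∩ K) ∪ (s : Set (EuclideanSpace ℝ (Fin n)))) :=
              measure_mono hsub
          _ ≤ volume ({x | ¬ F a x = 0} ∩ K) + volume (s : Set (EuclideanSpace ℝ (Fin n))) :=
              measure_union_le _ _
          _ = 0 := by rw [hnull, hZ, add_zero]
      exact hposK.ne' this
  -- continuity of the quadratic form
  have hqcont : Continuous q := by
    rw [hqdef]
    exact continuous_finset_sum _ fun i _ => continuous_finset_sum _ fun j _ =>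
      ((continuous_apply i).mul (continuous_apply j)).mul continuous_const
  have habs : Continuous (fun a : Fin (n + 1) → ℝ => q (fun i => |a i|)) :=
    hqcont.comp (continuous_pi fun i => (continuous_apply i).abs)
  -- extremes on the unit sphere
  set S := Metric.sphere (0 : Fin (n + 1) → ℝ) 1 with hS
  have hScomp : IsCompact S := isCompact_sphere _ _
  have hSne : S.Nonempty := NormedSpace.sphere_nonempty.mpr zero_le_one
  obtain ⟨a₀, ha₀S, hmin⟩ := hScomp.exists_isMinOn hSne hqcont.continuousOn
  obtain ⟨a₁, ha₁S, hmax⟩ := hScomp.exists_isMaxOn hSne habs.continuousOn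
  have ha₀ne : a₀ ≠ 0 := by
    intro h0
    have := mem_sphere_zero_iff_norm.mp ha₀S
    rw [h0] at this; simp at this
  have hqa₀ : 0 < q a₀ := hqpos a₀ ha₀ne
  set M := max (q fun i => |a₁ i|) 1 with hM
  have hMpos : (0:ℝ) < M := lt_of_lt_of_le one_pos (le_max_right _ _)
  set c := Real.sqrt (M / q a₀) with hc
  have hc_pos : 0 < c := Real.sqrt_pos.mpr (div_pos hMpos hqa₀)
  have hc_sq : c ^ 2 = M / q a₀ := Real.sq_sqrt (div_pos hMpos hqa₀).le
  have hhom : ∀ (t : ℝ) (w : Fin (n + 1) → ℝ), q (fun i => t * w i) = t ^ 2 * q w := by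
    intro t w
    rw [hqdef, Finset.mul_sum]
    refine Finset.sum_congr rfl fun i _ => ?_
    rw [Finset.mul_sum]
    exact Finset.sum_congr rfl fun j _ => by ring
  have key : ∀ a : Fin (n + 1) → ℝ, q (fun i => |a i|) ≤ c ^ 2 * q a := by
    intro a
    by_cases ha : a = 0
    · subst ha
      simp [hqdef]
    · have ht : 0 < ‖a‖ := norm_pos_iff.mpr ha
      set t := ‖a‖ with htdef
      set u : Fin (n + 1) → ℝ := t⁻¹ • a with hu
      have huS : u ∈ S := by
        rw [hS, mem_sphere_zero_iff_norm, hu, norm_smul, norm_inv, norm_norm,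
          inv_mul_cancel₀ ht.ne']
      have hau : ∀ i, a i = t * u i := by
        intro i
        rw [hu]
        simp [Pi.smul_apply, smul_eq_mul]
        field_simp
      have habs' : ∀ i, |a i| = t * |u i| := by
        intro i; rw [hau i, abs_mul, abs_of_pos ht]
      have h1 : q (fun i => |a i|) = t ^ 2 * q (fun i => |u i|) := by
        calc q (fun i => |a i|) = q (fun i => t * |u i|) := by
              congr 1; funext i; exact habs' i
          _ = t ^ 2 * q (fun i => |u i|) := hhom _ _
      have h2 : q a = t ^ 2 * q u := by
        calc q a = q (fun i => t * u i) := by congr 1; funext i; exact hau i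
          _ = t ^ 2 * q u := hhom _ _
      have hub : q (fun i => |u i|) ≤ M := le_trans (hmax huS) (le_max_left _ _)
      have hlb : q a₀ ≤ q u := hmin huS
      rw [h1, h2, hc_sq]
      rw [div_mul_eq_mul_div, le_div_iff₀ hqa₀]
      have ht2 : (0:ℝ) ≤ t ^ 2 := sq_nonneg t
      nlinarith [mul_le_mul_of_nonneg_left hub ht2, mul_le_mul_of_nonneg_left hlb
        (mul_nonneg ht2 hMpos.le)]
  -- Memℒp and the eLpNorm formula
  have hmem : ∀ a, MemLp (F a) 2 (volume.restrict K) := by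
    intro a
    obtain ⟨Cb, hCb⟩ := hKc.exists_bound_of_continuousOn (hFcont a).continuousOn
    refine ⟨(hFcont a).aestronglyMeasurable, ?_⟩
    refine lt_of_le_of_lt (eLpNorm_le_of_ae_bound (C := Cb)
      ((ae_restrict_iff' hKm).mpr (Filter.Eventually.of_forall fun x hx => hCb x hx))) ?_
    exact ENNReal.mul_lt_top
      (ENNReal.rpow_lt_top_of_nonneg (by positivity) (by simpa using hvol.ne))
      ENNReal.ofReal_lt_top
  have hsn : ∀ a, eLpNorm (F a) 2 (volume.restrict K) = ENNReal.ofReal (Real.sqrt (q a)) := by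
    intro a
    rw [(hmem a).eLpNorm_eq_integral_rpow_norm (by norm_num) (by norm_num)]
    congr 1
    rw [ENNReal.toReal_ofNat]
    have hxeq : ∀ x : EuclideanSpace ℝ (Fin n), ‖F a x‖ ^ (2:ℝ) = (F a x) ^ 2 := by
      intro x
      rw [Real.norm_eq_abs, (by norm_num : (2:ℝ) = ((2:ℕ):ℝ)), Real.rpow_natCast, sq_abs]
    simp_rw [hxeq]
    rw [hq a, Real.sqrt_eq_rpow]
    norm_num
  refine ⟨c, hc_pos, fun a => ?_⟩
  have e1 : (fun x => ∑ i, b.coord i x * |a i|) = F (fun i => |a i|) := rfl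
  have e2 : (fun x => ∑ i, b.coord i x * a i) = F a := rfl
  rw [e1, e2, hsn (fun i => |a i|), hsn a, ← ENNReal.ofReal_mul hc_pos.le]
  apply ENNReal.ofReal_le_ofReal
  calc Real.sqrt (q fun i => |a i|) ≤ Real.sqrt (c ^ 2 * q a) := Real.sqrt_le_sqrt (key a)
    _ = c * Real.sqrt (q a) := by rw [Real.sqrt_mul (sq_nonneg c), Real.sqrt_sq hc_pos.le]

theorem key_ineq (n : ℕ) :
    ∃ c : ℝ, 0 < c ∧ ∀ (b : AffineBasis (Fin (n + 1)) ℝ (EuclideanSpace ℝ (Fin n)))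
      (a : Fin (n + 1) → ℝ),
      eLpNorm (fun x => ∑ i, b.coord i x * |a i|) 2
          (volume.restrict (convexHull ℝ (Set.range ⇑b))) ≤
        ENNReal.ofReal c *
          eLpNorm (fun x => ∑ i, b.coord i x * a i) 2
            (volume.restrict (convexHull ℝ (Set.range ⇑b))) := by
  classical
  obtain ⟨b₀⟩ : Nonempty (AffineBasis (Fin (n + 1)) ℝ (EuclideanSpace ℝ (Fin n))) := by
    apply AffineBasis.exists_affineBasis_of_finiteDimensional
    simp [finrank_euclideanSpace_fin]
  obtain ⟨c, hc, href⟩ := ref_ineq n b₀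
  refine ⟨c, hc, fun b a => ?_⟩
  set i₀ : Fin (n + 1) := 0 with hi₀
  set L := (b₀.basisOf i₀).equiv (b.basisOf i₀) (Equiv.refl _) with hLdef
  set e : EuclideanSpace ℝ (Fin n) ≃ᵃ[ℝ] EuclideanSpace ℝ (Fin n) :=
    ((AffineEquiv.constVAdd ℝ _ (b₀ i₀)).symm.trans
      (L.toAffineEquiv.trans (AffineEquiv.constVAdd ℝ _ (b i₀)))) with hedef
  have heval : ∀ x, e x = b i₀ + L (-(b₀ i₀) + x) := fun x => rfl
  have heb : ∀ j, e (b₀ j) = b j := by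
    intro j
    by_cases hj : j = i₀
    · subst hj; rw [heval]; simp
    · rw [heval]
      have h1 : -(b₀ i₀) + b₀ j = b₀.basisOf i₀ ⟨j, hj⟩ := by
        rw [b₀.basisOf_apply, vsub_eq_sub]; abel
      rw [h1, hLdef, Module.Basis.equiv_apply, Equiv.refl_apply, b.basisOf_apply, vsub_eq_sub]
      abel
  have hcoord : ∀ (i : Fin (n + 1)) x, b.coord i (e x) = b₀.coord i x := by
    intro i x
    have h1 := Finset.map_affineCombination Finset.univ ⇑b₀ (fun j => b₀.coord j x)
      (b₀.sum_coord_apply_eq_one x) e.toAffineMap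
    rw [b₀.affineCombination_coord_eq_self x] at h1
    have h2 : ⇑e.toAffineMap ∘ ⇑b₀ = ⇑b := by funext j; exact heb j
    rw [h2] at h1
    have hx : e x = Finset.univ.affineCombination ℝ ⇑b fun j => b₀.coord j x := h1
    rw [hx, b.coord_apply_combination_of_mem (Finset.mem_univ i) (b₀.sum_coord_apply_eq_one x)]
  -- sets
  set K₀ : Set (EuclideanSpace ℝ (Fin n)) := convexHull ℝ (Set.range ⇑b₀) with hK₀
  set K : Set (EuclideanSpace ℝ (Fin n)) := convexHull ℝ (Set.range ⇑b) with hK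
  have himg : ⇑e '' K₀ = K := by
    have h2 : ⇑e.toAffineMap '' Set.range ⇑b₀ = Set.range ⇑b := by
      rw [show ⇑e.toAffineMap = ⇑e from rfl, ← Set.range_comp]
      exact congrArg Set.range (funext heb)
    calc ⇑e '' K₀ = ⇑e.toAffineMap '' (convexHull ℝ (Set.range ⇑b₀)) := rfl
      _ = convexHull ℝ (⇑e.toAffineMap '' Set.range ⇑b₀) := e.toAffineMap.image_convexHull _
      _ = K := by rw [h2]
  have hKm : MeasurableSet K :=
    ((Set.finite_range ⇑b).isCompact_convexHull ℝ).isClosed.measurableSet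
  have hem : Measurable ⇑e := e.toAffineMap.continuous_of_finiteDimensional.measurable
  -- measure transport
  set d : ℝ := LinearMap.det (L : EuclideanSpace ℝ (Fin n) →ₗ[ℝ] EuclideanSpace ℝ (Fin n)) with hd
  have hdet : d ≠ 0 := L.isUnit_det'.ne_zero
  set r : ℝ≥0∞ := ENNReal.ofReal |d⁻¹| with hr
  have hr0 : r ≠ 0 := by
    rw [hr]
    simp only [ne_eq, ENNReal.ofReal_eq_zero, not_le]
    positivity
  have hrtop : r ≠ ⊤ := ENNReal.ofReal_ne_top
  have hmap : Measure.map (⇑e) volume = r • volume := by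
    have hfun : ⇑e = (fun x => b i₀ + x) ∘ (⇑L ∘ (fun x => -(b₀ i₀) + x)) := by
      funext x; exact heval x
    have hmL : Measurable ⇑L :=
      L.toLinearMap.continuous_of_finiteDimensional.measurable
    have hma : Measurable fun x : EuclideanSpace ℝ (Fin n) => b i₀ + x :=
      measurable_id.const_add _
    have hmb : Measurable fun x : EuclideanSpace ℝ (Fin n) => -(b₀ i₀) + x :=
      measurable_id.const_add _
    rw [hfun]
    rw [← Measure.map_map hma (hmL.comp hmb)]
    rw [← Measure.map_map hmL hmb]
    rw [map_add_left_eq_self volume (-(b₀ i₀))]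
    have hcoe : ⇑L = ⇑(L : EuclideanSpace ℝ (Fin n) →ₗ[ℝ] EuclideanSpace ℝ (Fin n)) := rfl
    rw [hcoe, Measure.map_linearMap_addHaar_eq_smul_addHaar volume hdet]
    rw [Measure.map_smul, map_add_left_eq_self volume (b i₀)]
  -- relation between the two restricted eLpNorms
  set s' : ℝ≥0∞ := r ^ (1 / (2:ℝ≥0∞)).toReal with hs'
  have hs0 : s' ≠ 0 := by
    rw [hs']
    simp [ENNReal.rpow_eq_zero_iff, hr0, hrtop]
  have hstop : s' ≠ ⊤ := by
    rw [hs']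
    simp [ENNReal.rpow_eq_top_iff, hr0, hrtop]
  have hscale : ∀ G : EuclideanSpace ℝ (Fin n) → ℝ, Continuous G →
      eLpNorm (G ∘ ⇑e) 2 (volume.restrict K₀) = s' * eLpNorm G 2 (volume.restrict K) := by
    intro G hG
    have h1 : (volume.restrict K₀).map (⇑e) = r • volume.restrict K := by
      have hpre : ⇑e ⁻¹' K = K₀ := by
        rw [← himg, Set.preimage_image_eq _ e.injective]
      rw [← hpre, ← Measure.restrict_map hem hKm, hmap, Measure.restrict_smul]
    rw [← eLpNorm_map_measure hG.aestronglyMeasurable hem.aemeasurable, h1,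
      eLpNorm_smul_measure_of_ne_zero hr0, smul_eq_mul]
  have G1cont : Continuous (fun x => ∑ i, b.coord i x * a i) :=
    continuous_finset_sum _ fun i _ =>
      ((b.coord i).continuous_of_finiteDimensional).mul continuous_const
  have G2cont : Continuous (fun x => ∑ i, b.coord i x * |a i|) :=
    continuous_finset_sum _ fun i _ =>
      ((b.coord i).continuous_of_finiteDimensional).mul continuous_const
  have hcomp2 : ((fun x => ∑ i, b.coord i x * |a i|) ∘ ⇑e) =
      fun y => ∑ i, b₀.coord i y * |a i| := by
    funext y
    simp only [Function.comp_apply]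
    exact Finset.sum_congr rfl fun i _ => by rw [hcoord]
  have hcomp1 : ((fun x => ∑ i, b.coord i x * a i) ∘ ⇑e) =
      fun y => ∑ i, b₀.coord i y * a i := by
    funext y
    simp only [Function.comp_apply]
    exact Finset.sum_congr rfl fun i _ => by rw [hcoord]
  have hmain := href a
  rw [← hcomp2, ← hcomp1, hscale _ G2cont, hscale _ G1cont, mul_left_comm] at hmain
  exact (ENNReal.mul_le_mul_iff_right hs0 hstop).mp hmain



open MeasureTheory

/-- Element-wise L² discrete commutator property (super approximation, Lemma 3.2 of the
paper): there is a constant `C` depending only on the dimension `n` such that for every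
nondegenerate simplex `K` of diameter at most `h`, every affine map `v` and every weight
`φ` Lipschitz on `K` with constant `L`,
`‖vφ − I(vφ)‖_{L²(K)} ≤ C L h ‖v‖_{L²(K)}`. -/
theorem discrete_commutator_L2 (n : ℕ) (hn : 1 ≤ n) :
    ∃ C : ℝ, 0 < C ∧
      ∀ (h : ℝ), 0 < h →
      ∀ (b : AffineBasis (Fin (n + 1)) ℝ (EuclideanSpace ℝ (Fin n)))
        (K : Set (EuclideanSpace ℝ (Fin n))), K = convexHull ℝ (Set.range ⇑b) →
        Metric.diam K ≤ h →
        ∀ (v : EuclideanSpace ℝ (Fin n) →ᵃ[ℝ] ℝ)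
          (φ : EuclideanSpace ℝ (Fin n) → ℝ) (L : NNReal),
          LipschitzOnWith L φ K →
          (eLpNorm (fun x => v x * φ x - ∑ i, b.coord i x * (v (b i) * φ (b i))) 2
              (volume.restrict K)).toReal ≤
            C * L * h * (eLpNorm (fun x => v x) 2 (volume.restrict K)).toReal := by
  classical
  obtain ⟨c, hc, hkey⟩ := key_ineq n
  refine ⟨c, hc, ?_⟩
  intro h hh b K hKeq hdiam v φ L hφ
  subst hKeq
  set K : Set (EuclideanSpace ℝ (Fin n)) := convexHull ℝ (Set.range ⇑b) with hK
  have hKc : IsCompact K := (Set.finite_range ⇑b).isCompact_convexHull ℝ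
  have hKm : MeasurableSet K := hKc.isClosed.measurableSet
  have hbK : ∀ i, b i ∈ K := fun i => subset_convexHull ℝ _ (Set.mem_range_self i)
  have hnn : ∀ (i : Fin (n + 1)) {x}, x ∈ K → 0 ≤ b.coord i x := by
    intro i x hx
    rw [hK, b.convexHull_eq_nonneg_coord] at hx
    exact hx i
  have hvcont : Continuous fun x => v x := v.continuous_of_finiteDimensional
  have vrepr : ∀ x, v x = ∑ i, b.coord i x * v (b i) := by
    intro x
    have h1 := Finset.map_affineCombination Finset.univ ⇑b (fun i => b.coord i x)
      (b.sum_coord_apply_eq_one x) v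
    rw [b.affineCombination_coord_eq_self] at h1
    rw [h1, Finset.univ.affineCombination_eq_linear_combination _ _
      (b.sum_coord_apply_eq_one x)]
    exact Finset.sum_congr rfl fun i _ => by simp [smul_eq_mul]
  set g : EuclideanSpace ℝ (Fin n) → ℝ := fun x => ∑ i, b.coord i x * |v (b i)| with hg
  have hpt : ∀ x ∈ K, |v x * φ x - ∑ i, b.coord i x * (v (b i) * φ (b i))| ≤ ((L:ℝ) * h) * g x := by
    intro x hx
    have hsplit : v x * φ x - ∑ i, b.coord i x * (v (b i) * φ (b i))
        = ∑ i, b.coord i x * v (b i) * (φ x - φ (b i)) := by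
      rw [vrepr x, Finset.sum_mul, ← Finset.sum_sub_distrib]
      exact Finset.sum_congr rfl fun i _ => by ring
    rw [hsplit]
    calc |∑ i, b.coord i x * v (b i) * (φ x - φ (b i))|
        ≤ ∑ i, |b.coord i x * v (b i) * (φ x - φ (b i))| := Finset.abs_sum_le_sum_abs _ _
      _ ≤ ∑ i, b.coord i x * |v (b i)| * ((L:ℝ) * h) := by
          refine Finset.sum_le_sum fun i _ => ?_
          rw [abs_mul, abs_mul, abs_of_nonneg (hnn i hx)]
          refine mul_le_mul_of_nonneg_left ?_
            (mul_nonneg (hnn i hx) (abs_nonneg _))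
          have hd : dist (φ x) (φ (b i)) ≤ (L : ℝ) * dist x (b i) :=
            hφ.dist_le_mul x hx (b i) (hbK i)
          have hdd : dist x (b i) ≤ h :=
            le_trans (Metric.dist_le_diam_of_mem hKc.isBounded hx (hbK i)) hdiam
          rw [Real.dist_eq] at hd
          calc |φ x - φ (b i)| ≤ (L:ℝ) * dist x (b i) := hd
            _ ≤ (L:ℝ) * h := mul_le_mul_of_nonneg_left hdd L.coe_nonneg
      _ = ((L:ℝ) * h) * g x := by
          rw [hg, Finset.mul_sum]
          exact Finset.sum_congr rfl fun i _ => by ring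
  set f : EuclideanSpace ℝ (Fin n) → ℝ :=
    fun x => v x * φ x - ∑ i, b.coord i x * (v (b i) * φ (b i)) with hf
  have h1 : eLpNorm f 2 (volume.restrict K) ≤
      eLpNorm (fun x => ((L:ℝ) * h) * g x) 2 (volume.restrict K) := by
    apply eLpNorm_mono_ae
    rw [ae_restrict_iff' hKm]
    refine Filter.Eventually.of_forall fun x hx => ?_
    rw [Real.norm_eq_abs, Real.norm_eq_abs]
    exact le_trans (hpt x hx) (le_abs_self _)
  have hLh : (0:ℝ) ≤ (L:ℝ) * h := mul_nonneg L.coe_nonneg hh.le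
  have h2 : eLpNorm (fun x => ((L:ℝ) * h) * g x) 2 (volume.restrict K)
      = ENNReal.ofReal ((L:ℝ) * h) * eLpNorm g 2 (volume.restrict K) := by
    have hsm : (fun x => ((L:ℝ) * h) * g x) = ((L:ℝ) * h) • g := rfl
    rw [hsm, eLpNorm_const_smul, ← Real.enorm_eq_ofReal hLh]
  have h3 : eLpNorm g 2 (volume.restrict K) ≤
      ENNReal.ofReal c * eLpNorm (fun x => ∑ i, b.coord i x * v (b i)) 2 (volume.restrict K) :=
    hkey b (fun i => v (b i))
  have h4 : (fun x => ∑ i, b.coord i x * v (b i)) = fun x => v x := by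
    funext x; exact (vrepr x).symm
  rw [h4] at h3
  have hvfin : eLpNorm (fun x => v x) 2 (volume.restrict K) < ⊤ := by
    obtain ⟨Cb, hCb⟩ := hKc.exists_bound_of_continuousOn hvcont.continuousOn
    refine lt_of_le_of_lt (eLpNorm_le_of_ae_bound (C := Cb)
      ((ae_restrict_iff' hKm).mpr (Filter.Eventually.of_forall fun x hx => hCb x hx))) ?_
    exact ENNReal.mul_lt_top
      (ENNReal.rpow_lt_top_of_nonneg (by positivity) (by simpa using hKc.measure_lt_top.ne))
      ENNReal.ofReal_lt_top
  have hchain : eLpNorm f 2 (volume.restrict K) ≤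
      ENNReal.ofReal ((L:ℝ) * h) *
        (ENNReal.ofReal c * eLpNorm (fun x => v x) 2 (volume.restrict K)) := by
    refine le_trans h1 ?_
    rw [h2]
    exact mul_le_mul_right h3 _
  have hfin : ENNReal.ofReal ((L:ℝ) * h) *
      (ENNReal.ofReal c * eLpNorm (fun x => v x) 2 (volume.restrict K)) ≠ ⊤ :=
    ENNReal.mul_ne_top ENNReal.ofReal_ne_top
      (ENNReal.mul_ne_top ENNReal.ofReal_ne_top hvfin.ne)
  have := ENNReal.toReal_mono hfin hchain
  rw [ENNReal.toReal_mul, ENNReal.toReal_mul, ENNReal.toReal_ofReal hLh,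
    ENNReal.toReal_ofReal hc.le] at this
  calc (eLpNorm f 2 (volume.restrict K)).toReal
      ≤ (L:ℝ) * h * (c * (eLpNorm (fun x => v x) 2 (volume.restrict K)).toReal) := this
    _ = c * (L:ℝ) * h * (eLpNorm (fun x => v x) 2 (volume.restrict K)).toReal := by ring
end
end

section
/- Let β₁ ≠ 0 be a real number and set σ = β₁/|β₁|. Let ψ₂ : ℝ → ℝ be a bounded measurable function with ψ₂ ≥ 0, and define φ(x,y) = σ e^{−x} ψ₂(y). Let v : ℝ² → ℝ be continuously differentiable on an open neighborhood of the unit square [0,1]². Then 2 ∫_{[0,1]²} β₁ (∂ₓv)(x,y) · v(x,y) · φ(x,y) dx dy = β₁ ∫₀¹ v(1,y)² φ(1,y) dy − β₁ ∫₀¹ v(0,y)² φ(0,y) dy + |β₁| ∫_{[0,1]²} v(x,y)² |φ(x,y)| dx dy. -/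
open MeasureTheory

/-- Coercivity identity for the convective term on the unit square (used in Lemmas 4.4
and 4.8 of the paper): with `β = (β₁, 0)`, `σ = β₁/|β₁|` and `φ(x,y) = σ e^{−x} ψ₂(y)`
for a bounded measurable `ψ₂ ≥ 0`, one has
`2(β·∇v, vφ)_Ω = ⟨v β·n, vφ⟩_{∂Ω} + |β| ∫_Ω v² |φ|`. -/
theorem convective_coercivity_identity (β₁ : ℝ) (hβ : β₁ ≠ 0) (σ : ℝ)
    (hσ : σ = β₁ / |β₁|)
    (ψ₂ : ℝ → ℝ) (hmeas : Measurable ψ₂) (hbdd : ∃ Cψ : ℝ, ∀ y, |ψ₂ y| ≤ Cψ)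
    (hpos : ∀ y, 0 ≤ ψ₂ y)
    (φ : ℝ × ℝ → ℝ) (hφ : ∀ p, φ p = σ * Real.exp (-p.1) * ψ₂ p.2)
    (v : ℝ × ℝ → ℝ) (U : Set (ℝ × ℝ)) (hU : IsOpen U)
    (hsub : Set.Icc (0 : ℝ) 1 ×ˢ Set.Icc (0 : ℝ) 1 ⊆ U)
    (hv : ContDiffOn ℝ 1 v U) :
    2 * ∫ p in Set.Icc (0 : ℝ) 1 ×ˢ Set.Icc (0 : ℝ) 1,
        β₁ * fderiv ℝ v p (1, 0) * v p * φ p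
      = β₁ * (∫ y in (0 : ℝ)..1, (v (1, y)) ^ 2 * φ (1, y))
        - β₁ * (∫ y in (0 : ℝ)..1, (v (0, y)) ^ 2 * φ (0, y))
        + |β₁| * ∫ p in Set.Icc (0 : ℝ) 1 ×ˢ Set.Icc (0 : ℝ) 1,
            (v p) ^ 2 * |φ p| := by
  obtain ⟨Cψ, hCψ⟩ := hbdd
  have hCψ0 : 0 ≤ Cψ := le_trans (abs_nonneg _) (hCψ 0)
  set s : Set ℝ := Set.Icc (0:ℝ) 1 with hs
  set S : Set (ℝ × ℝ) := s ×ˢ s with hSdef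
  -- basic algebraic facts
  have habs : |β₁| ≠ 0 := abs_ne_zero.mpr hβ
  have hβσ : β₁ * σ = |β₁| := by
    rw [hσ]
    field_simp
    exact (sq_abs β₁).symm
  have hσabs : |σ| = 1 := by
    rw [hσ, abs_div, abs_abs, div_self habs]
  -- topology/measure basics
  have hmS : MeasurableSet S := measurableSet_Icc.prod measurableSet_Icc
  have hcS : IsCompact S := isCompact_Icc.prod isCompact_Icc
  have hFin : volume S ≠ ⊤ := hcS.measure_lt_top.ne
  have hvc : ContinuousOn v U := hv.continuousOn
  have hDc : ContinuousOn (fun p => fderiv ℝ v p (1, 0)) U :=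
    (hv.continuousOn_fderiv_of_isOpen hU le_rfl).clm_apply continuousOn_const
  -- bounds on the compact square
  obtain ⟨Mv, hMv⟩ := hcS.exists_bound_of_continuousOn (hvc.mono hsub)
  obtain ⟨MD, hMD⟩ := hcS.exists_bound_of_continuousOn (hDc.mono hsub)
  have h00 : ((0:ℝ), (0:ℝ)) ∈ S := by
    constructor <;> simp [hs]
  have hMv0 : 0 ≤ Mv := le_trans (norm_nonneg _) (hMv _ h00)
  have hMD0 : 0 ≤ MD := le_trans (norm_nonneg _) (hMD _ h00)
  -- measurability
  have hφm : Measurable φ := by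
    have : φ = fun p => σ * Real.exp (-p.1) * ψ₂ p.2 := funext hφ
    rw [this]
    exact (measurable_const.mul (Real.measurable_exp.comp measurable_fst.neg)).mul
      (hmeas.comp measurable_snd)
  have hDm : Measurable (fun p : ℝ × ℝ => fderiv ℝ v p (1, 0)) :=
    measurable_fderiv_apply_const ℝ v (1, 0)
  have hvA : AEStronglyMeasurable v (volume.restrict S) :=
    (hvc.mono hsub).aestronglyMeasurable hmS
  -- bound on φ over the square
  have hφb : ∀ p ∈ S, |φ p| ≤ Cψ := by
    intro p hp
    rw [hφ, abs_mul, abs_mul, hσabs, abs_of_nonneg (Real.exp_pos _).le, one_mul]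
    calc Real.exp (-p.1) * |ψ₂ p.2| ≤ 1 * Cψ := by
          apply mul_le_mul _ (hCψ _) (abs_nonneg _) zero_le_one
          rw [Real.exp_le_one_iff]
          simpa using hp.1.1
      _ = Cψ := one_mul _
  -- a helper for integrability of bounded a.e.-measurable functions on the square
  have bddInt : ∀ (f : ℝ × ℝ → ℝ) (M : ℝ), AEStronglyMeasurable f (volume.restrict S) →
      (∀ p ∈ S, |f p| ≤ M) → IntegrableOn f S := by
    intro f M hm hb
    exact ⟨hm, HasFiniteIntegral.restrict_of_bounded (C := M) hFin.lt_top
      ((ae_restrict_iff' hmS).mpr (Filter.Eventually.of_forall hb))⟩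
  -- integrability of all integrands
  have hI1 : IntegrableOn (fun p => β₁ * fderiv ℝ v p (1, 0) * v p * φ p) S := by
    apply bddInt _ (|β₁| * MD * Mv * Cψ)
    · exact ((aestronglyMeasurable_const.mul hDm.aestronglyMeasurable).mul hvA).mul
        hφm.aestronglyMeasurable
    · intro p hp
      have : |β₁ * fderiv ℝ v p (1, 0) * v p * φ p|
          = |β₁| * |fderiv ℝ v p (1, 0)| * |v p| * |φ p| := by
        rw [abs_mul, abs_mul, abs_mul]
      rw [this]
      gcongr
      · exact hMD p hp
      · exact hMv p hp
      · exact hφb p hp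
  have hI2 : IntegrableOn (fun p => (v p) ^ 2 * |φ p|) S := by
    have heq : (fun p => (v p) ^ 2 * |φ p|) = fun p => (v p * v p) * |φ p| := by
      funext p; ring
    rw [heq]
    apply bddInt _ (Mv * Mv * Cψ)
    · exact ((hvA.mul hvA)).mul hφm.abs.aestronglyMeasurable
    · intro p hp
      have : abs (v p * v p * |φ p|) = |v p| * |v p| * |φ p| := by
        rw [abs_mul, abs_mul, abs_abs]
      rw [this]
      gcongr
      · exact hMv p hp
      · exact hMv p hp
      · exact hφb p hp
  have hIF : IntegrableOn
      (fun p => 2 * (β₁ * fderiv ℝ v p (1, 0) * v p * φ p) - |β₁| * ((v p) ^ 2 * |φ p|)) S :=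
    (hI1.const_mul 2).sub (hI2.const_mul _)
  -- Fubini: reduce the product integral to iterated integrals (outer in y)
  have h1 : (volume : Measure (ℝ × ℝ)).restrict S
      = ((volume : Measure ℝ).restrict s).prod ((volume : Measure ℝ).restrict s) := by
    rw [Measure.prod_restrict]
    rfl
  have hswap : (∫ p in S, (2 * (β₁ * fderiv ℝ v p (1, 0) * v p * φ p)
        - |β₁| * ((v p) ^ 2 * |φ p|)))
      = ∫ y in s, ∫ x in s, (2 * (β₁ * fderiv ℝ v (x, y) (1, 0) * v (x, y) * φ (x, y))
        - |β₁| * ((v (x, y)) ^ 2 * |φ (x, y)|)) := by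
    rw [show (∫ p in S, (2 * (β₁ * fderiv ℝ v p (1, 0) * v p * φ p)
        - |β₁| * ((v p) ^ 2 * |φ p|)))
      = ∫ p, (2 * (β₁ * fderiv ℝ v p (1, 0) * v p * φ p)
        - |β₁| * ((v p) ^ 2 * |φ p|))
          ∂(((volume : Measure ℝ).restrict s).prod ((volume : Measure ℝ).restrict s)) from by
      rw [← h1]]
    exact integral_prod_symm _ (by rw [← h1]; exact hIF)
  -- the inner integral via the fundamental theorem of calculus
  have inner : ∀ y ∈ s, (∫ x in s, (2 * (β₁ * fderiv ℝ v (x, y) (1, 0) * v (x, y) * φ (x, y))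
        - |β₁| * ((v (x, y)) ^ 2 * |φ (x, y)|)))
      = β₁ * σ * ψ₂ y * ((v (1, y)) ^ 2 * Real.exp (-1) - (v (0, y)) ^ 2) := by
    intro y hy
    have hFptw : ∀ x : ℝ, (2 * (β₁ * fderiv ℝ v (x, y) (1, 0) * v (x, y) * φ (x, y))
        - |β₁| * ((v (x, y)) ^ 2 * |φ (x, y)|))
        = (β₁ * σ * ψ₂ y) * (2 * fderiv ℝ v (x, y) (1, 0) * v (x, y) * Real.exp (-x)
            - (v (x, y)) ^ 2 * Real.exp (-x)) := by
      intro x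
      rw [hφ (x, y), ← hβσ]
      simp only
      rw [abs_mul, abs_mul, hσabs, abs_of_nonneg (Real.exp_pos (-x)).le,
        abs_of_nonneg (hpos y)]
      ring
    simp only [hFptw]
    rw [integral_const_mul]
    congr 1
    -- FTC part
    have hline : ContinuousOn (fun x : ℝ => ((x, y) : ℝ × ℝ)) (Set.Icc 0 1) :=
      (continuous_id.prodMk continuous_const).continuousOn
    have hmap : Set.MapsTo (fun x : ℝ => ((x, y) : ℝ × ℝ)) (Set.Icc 0 1) U := fun x hx =>
      hsub ⟨hx, hy⟩
    have hgc : ContinuousOn (fun x : ℝ => 2 * fderiv ℝ v (x, y) (1, 0) * v (x, y) * Real.exp (-x)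
        - (v (x, y)) ^ 2 * Real.exp (-x)) (Set.Icc 0 1) := by
      have hexp : ContinuousOn (fun x : ℝ => Real.exp (-x)) (Set.Icc 0 1) :=
        (Real.continuous_exp.comp continuous_neg).continuousOn
      exact (((continuousOn_const.mul (hDc.comp hline hmap)).mul
        (hvc.comp hline hmap)).mul hexp).sub (((hvc.comp hline hmap).pow 2).mul hexp)
    have hderiv : ∀ x ∈ Set.uIcc (0:ℝ) 1,
        HasDerivAt (fun x : ℝ => (v (x, y)) ^ 2 * Real.exp (-x))
          (2 * fderiv ℝ v (x, y) (1, 0) * v (x, y) * Real.exp (-x)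
            - (v (x, y)) ^ 2 * Real.exp (-x)) x := by
      intro x hx
      rw [Set.uIcc_of_le zero_le_one] at hx
      have hxy : ((x, y) : ℝ × ℝ) ∈ U := hsub ⟨hx, hy⟩
      have hdiff : DifferentiableAt ℝ v (x, y) :=
        (hv.differentiableOn one_ne_zero).differentiableAt (hU.mem_nhds hxy)
      have hw : HasDerivAt (fun t : ℝ => v (t, y)) (fderiv ℝ v (x, y) (1, 0)) x :=
        hdiff.hasFDerivAt.comp_hasDerivAt x ((hasDerivAt_id x).prodMk (hasDerivAt_const x y))
      have he : HasDerivAt (fun t : ℝ => Real.exp (-t)) (Real.exp (-x) * (-1)) x := by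
        simpa using (hasDerivAt_neg' x).exp
      have : HasDerivAt (fun t : ℝ => (v (t, y)) ^ 2 * Real.exp (-t)) _ x :=
        (hw.fun_pow 2).fun_mul he
      convert this using 1
      simp only [pow_one, Nat.cast_ofNat]
      ring
    have hint : IntervalIntegrable (fun x : ℝ =>
        2 * fderiv ℝ v (x, y) (1, 0) * v (x, y) * Real.exp (-x)
          - (v (x, y)) ^ 2 * Real.exp (-x)) volume 0 1 :=
      hgc.intervalIntegrable_of_Icc zero_le_one
    have hftc := intervalIntegral.integral_eq_sub_of_hasDerivAt hderiv hint
    rw [intervalIntegral.integral_of_le zero_le_one] at hftc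
    rw [hs, integral_Icc_eq_integral_Ioc, hftc]
    norm_num
  -- the outer integral
  have houter : (∫ y in s, ∫ x in s,
        (2 * (β₁ * fderiv ℝ v (x, y) (1, 0) * v (x, y) * φ (x, y))
          - |β₁| * ((v (x, y)) ^ 2 * |φ (x, y)|)))
      = ∫ y in s, (β₁ * ((v (1, y)) ^ 2 * φ (1, y)) - β₁ * ((v (0, y)) ^ 2 * φ (0, y))) := by
    apply setIntegral_congr_fun measurableSet_Icc
    intro y hy
    dsimp only
    rw [inner y hy, hφ (1, y), hφ (0, y)]
    simp only
    rw [show Real.exp (-(0:ℝ)) = 1 by norm_num]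
    ring
  -- integrability of the boundary terms
  have hFin1 : volume s ≠ ⊤ := by
    rw [hs]; simp [Real.volume_Icc]
  have bddInt1 : ∀ (f : ℝ → ℝ) (M : ℝ), AEStronglyMeasurable f (volume.restrict s) →
      (∀ y ∈ s, |f y| ≤ M) → IntegrableOn f s := by
    intro f M hm hb
    exact ⟨hm, HasFiniteIntegral.restrict_of_bounded (C := M) hFin1.lt_top
      ((ae_restrict_iff' measurableSet_Icc).mpr (Filter.Eventually.of_forall hb))⟩
  have hbdy : ∀ c : ℝ, c ∈ s →
      IntegrableOn (fun y => β₁ * ((v (c, y)) ^ 2 * φ (c, y))) s := by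
    intro c hc
    apply bddInt1 _ (|β₁| * (Mv * Mv * Cψ))
    · have hvlc : ContinuousOn (fun y : ℝ => v (c, y)) s := by
        apply hvc.comp ((continuous_const.prodMk continuous_id).continuousOn)
        intro y hy
        exact hsub ⟨hc, hy⟩
      have hφlc : Measurable (fun y : ℝ => φ (c, y)) :=
        hφm.comp (measurable_const.prodMk measurable_id)
      have h2 : (fun y : ℝ => β₁ * ((v (c, y)) ^ 2 * φ (c, y)))
          = fun y => β₁ * ((v (c, y) * v (c, y)) * φ (c, y)) := by
        funext y; ring
      rw [h2]
      exact aestronglyMeasurable_const.mul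
        ((((hvlc.aestronglyMeasurable measurableSet_Icc).mul
          (hvlc.aestronglyMeasurable measurableSet_Icc))).mul hφlc.aestronglyMeasurable)
    · intro y hy
      have hcy : ((c, y) : ℝ × ℝ) ∈ S := ⟨hc, hy⟩
      have : |β₁ * ((v (c, y)) ^ 2 * φ (c, y))| = |β₁| * (|v (c, y)| * |v (c, y)| * |φ (c, y)|) := by
        rw [abs_mul, abs_mul, pow_two, abs_mul]
      rw [this]
      gcongr
      · exact hMv _ hcy
      · exact hMv _ hcy
      · exact hφb _ hcy
  have h1s : (1:ℝ) ∈ s := by simp [hs]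
  have h0s : (0:ℝ) ∈ s := by simp [hs]
  -- put everything together
  have key : (∫ p in S, (2 * (β₁ * fderiv ℝ v p (1, 0) * v p * φ p)
        - |β₁| * ((v p) ^ 2 * |φ p|)))
      = β₁ * (∫ y in s, (v (1, y)) ^ 2 * φ (1, y))
        - β₁ * (∫ y in s, (v (0, y)) ^ 2 * φ (0, y)) := by
    rw [hswap, houter, integral_sub (hbdy 1 h1s) (hbdy 0 h0s), integral_const_mul,
      integral_const_mul]
  rw [integral_sub (hI1.const_mul 2) (hI2.const_mul _), integral_const_mul,
    integral_const_mul] at key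
  have hb1 : (∫ y in (0:ℝ)..1, (v (1, y)) ^ 2 * φ (1, y))
      = ∫ y in s, (v (1, y)) ^ 2 * φ (1, y) := by
    rw [intervalIntegral.integral_of_le zero_le_one, hs, integral_Icc_eq_integral_Ioc]
  have hb0 : (∫ y in (0:ℝ)..1, (v (0, y)) ^ 2 * φ (0, y))
      = ∫ y in s, (v (0, y)) ^ 2 * φ (0, y) := by
    rw [intervalIntegral.integral_of_le zero_le_one, hs, integral_Icc_eq_integral_Ioc]
  rw [hb1, hb0]
  linarith
end
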